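/- Let G be a finite group with trivial center. If there exists a ring with unit group isomorphic to G, then there exists a two-sided ideal I of the group algebra F₂[G] such that the unit group of F₂[G]/I is isomorphic to G and the composition G → F₂[G]^× → (F₂[G]/I)^× ≅ G is the identity map. -/

import Mathlib

open MonoidAlgebra in
theorem aux_exists_ideal (G : Type) [Group G] [Finite G] (hG : Subgroup.center G = ⊥)
    (R : Type) [Ring R] [Nontrivial R] (e : Rˣ ≃* G) :
    ∃ (I : TwoSidedIdeal (MonoidAlgebra (ZMod 2) G))
      (e : (I.ringCon.Quotient)ˣ ≃* G),
      ∀ g : G,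
        e (((RingCon.mk' I.ringCon).toMonoidHom.comp
            (MonoidAlgebra.of (ZMod 2) G)).toHomUnits g) = g := by
  -- Step 1: R has characteristic 2
  have hcen : e (-1 : Rˣ) = 1 := by
    have : e (-1 : Rˣ) ∈ Subgroup.center G := by
      rw [Subgroup.mem_center_iff]
      intro g
      have : e.symm g * (-1 : Rˣ) = (-1 : Rˣ) * e.symm g := by
        ext; simp
      calc g * e (-1 : Rˣ) = e (e.symm g * -1) := by rw [map_mul, e.apply_symm_apply]
        _ = e (-1 * e.symm g) := by rw [this]
        _ = e (-1 : Rˣ) * g := by rw [map_mul, e.apply_symm_apply]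
    rw [hG] at this
    simpa using this
  have hneg : (-1 : Rˣ) = 1 := by
    have := congrArg e.symm hcen
    simpa using this
  have h2 : (2 : R) = 0 := by
    have : ((-1 : Rˣ) : R) = ((1 : Rˣ) : R) := by rw [hneg]
    push_cast at this
    have h11 : (1 : R) + 1 = -1 + 1 := by rw [this]
    rw [show (2:R) = 1 + 1 from one_add_one_eq_two.symm, h11, neg_add_cancel]
  haveI : CharP R 2 := (CharP.charP_iff_prime_eq_zero Nat.prime_two).2 h2
  letI : Algebra (ZMod 2) R := ZMod.algebra R 2
  -- Step 2: the ring hom φ : 𝔽₂[G] → R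
  set f : G →* R := (Units.coeHom R).comp e.symm.toMonoidHom with hf
  set φ : MonoidAlgebra (ZMod 2) G →+* R :=
    ((MonoidAlgebra.lift (ZMod 2) R G) f).toRingHom with hφ
  have hφof : ∀ g : G, φ (MonoidAlgebra.of (ZMod 2) G g) = ((e.symm g : Rˣ) : R) := by
    intro g
    simp [hφ, hf]
  -- Step 3: the quotient ring embeds into R
  set c := (TwoSidedIdeal.ker φ).ringCon with hc
  set ψ : c.Quotient →+* R :=
    { toFun := Quotient.lift φ (fun a b (h : φ a = φ b) => h)
      map_one' := map_one φ
      map_mul' := fun x y => Quotient.inductionOn₂ x y (fun a b => map_mul φ a b)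
      map_zero' := map_zero φ
      map_add' := fun x y => Quotient.inductionOn₂ x y (fun a b => map_add φ a b) } with hψ
  have hψmk : ∀ a, ψ (c.mk' a) = φ a := fun a => rfl
  have hψinj : Function.Injective ψ := by
    intro x y
    refine Quotient.inductionOn₂ x y (fun a b h => ?_)
    exact Quot.sound (h : φ a = φ b)
  -- Step 4: units of the quotient are isomorphic to Rˣ
  have hsurj : Function.Surjective (Units.map (ψ : c.Quotient →* R)) := by
    intro u
    have hval : φ (MonoidAlgebra.of (ZMod 2) G (e u)) = (u : R) := by
      rw [hφof, e.symm_apply_apply]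
    have hval' : φ (MonoidAlgebra.of (ZMod 2) G (e u)⁻¹) = ((u⁻¹ : Rˣ) : R) := by
      rw [hφof, map_inv]
      simp
    refine ⟨⟨c.mk' (MonoidAlgebra.of (ZMod 2) G (e u)),
      c.mk' (MonoidAlgebra.of (ZMod 2) G (e u)⁻¹), ?_, ?_⟩, ?_⟩
    · apply hψinj
      rw [map_mul]
      simp only [hψmk, hval, hval', map_one]
      simp
    · apply hψinj
      rw [map_mul]
      simp only [hψmk, hval, hval', map_one]
      simp
    · ext
      exact hval
  have hinj : Function.Injective (Units.map (ψ : c.Quotient →* R)) := by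
    intro u v h
    ext
    exact hψinj (congrArg Units.val h)
  set F : (c.Quotient)ˣ →* G :=
    e.toMonoidHom.comp (Units.map (ψ : c.Quotient →* R)) with hF
  have hFbij : Function.Bijective F := by
    refine ⟨fun a b h => hinj (e.injective h), fun g => ?_⟩
    obtain ⟨u, hu⟩ := hsurj (e.symm g)
    exact ⟨u, by rw [hF]; simp [hu]⟩
  refine ⟨TwoSidedIdeal.ker φ, MulEquiv.ofBijective F hFbij, fun g => ?_⟩
  show F (((RingCon.mk' c).toMonoidHom.comp (MonoidAlgebra.of (ZMod 2) G)).toHomUnits g) = g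
  rw [hF]
  have : (Units.map (ψ : c.Quotient →* R))
      (((RingCon.mk' c).toMonoidHom.comp (MonoidAlgebra.of (ZMod 2) G)).toHomUnits g)
      = e.symm g := by
    ext
    exact hφof g
  simp only [MonoidHom.comp_apply, MulEquiv.coe_toMonoidHom]
  rw [this]
  exact e.apply_symm_apply g

theorem exists_ideal_of_units_iso
    (G : Type) [Group G] [Finite G] (hG : Subgroup.center G = ⊥)
    (hR : ∃ (R : Type) (_ : Ring R), Nonempty (Rˣ ≃* G)) :
    ∃ (I : TwoSidedIdeal (MonoidAlgebra (ZMod 2) G))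
      (e : (I.ringCon.Quotient)ˣ ≃* G),
      ∀ g : G,
        e (((RingCon.mk' I.ringCon).toMonoidHom.comp
            (MonoidAlgebra.of (ZMod 2) G)).toHomUnits g) = g := by
  obtain ⟨R, _, ⟨e⟩⟩ := hR
  rcases subsingleton_or_nontrivial R with hs | hn
  · haveI : Subsingleton Rˣ := ⟨fun a b => Units.ext (Subsingleton.elim _ _)⟩
    haveI : Subsingleton G := e.toEquiv.symm.subsingleton
    haveI : Unique G := ⟨⟨1⟩, fun a => Subsingleton.elim a 1⟩
    haveI : Unique ((ZMod 2)ˣ) := ⟨⟨1⟩, by decide⟩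
    exact aux_exists_ideal G hG (ZMod 2) MulEquiv.ofUnique
  · exact aux_exists_ideal G hG R e
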